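/- arXiv:2602.01463 — 5 statements merged into one kernel-verified Lean document; each statement's English description precedes it below -/
import Mathlib

section
/- Fix a real number x with x ∉ [0,1]. Set a = 1 and b = (x-1)/x (note x ≠ 0). Then (1-x)·a + x·b = 0, (1-x)·b + x·a = (2x-1)/x ≠ 0, and a - b = 1/x ≠ 0. Consequently there do not exist isometries U, V, S, T ∈ M_{2,1}(ℂ) (columns u,v,s,t ∈ ℂ² of unit norm) satisfying diag(|a|²,|b|²) = |((1-x)a+xb)|²·uu* + |((1-x)b+xa)|²·vv* + x(1-x)(|a-b|²·ss* + |a-b|²·tt*). -/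
open Matrix Complex

/-- The weighted parallelogram isometry identity fails for every `x ∉ [0,1]`,
already in dimension one (scalars `a = 1`, `b = (x-1)/x`). -/
theorem no_isometry_identity_outside_unit_interval (x : ℝ) (hx : x ∉ Set.Icc (0:ℝ) 1) :
    ((1 - (x:ℂ)) * 1 + (x:ℂ) * (((x:ℂ) - 1) / (x:ℂ)) = 0) ∧
    ((1 - (x:ℂ)) * (((x:ℂ) - 1) / (x:ℂ)) + (x:ℂ) * 1 = (2 * (x:ℂ) - 1) / (x:ℂ)) ∧
    ((1 - (x:ℂ)) * (((x:ℂ) - 1) / (x:ℂ)) + (x:ℂ) * 1 ≠ 0) ∧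
    ((1:ℂ) - ((x:ℂ) - 1) / (x:ℂ) = 1 / (x:ℂ)) ∧
    ((1:ℂ) - ((x:ℂ) - 1) / (x:ℂ) ≠ 0) ∧
    ¬ ∃ U V S T : Matrix (Fin 2) (Fin 1) ℂ,
        Uᴴ * U = 1 ∧ Vᴴ * V = 1 ∧ Sᴴ * S = 1 ∧ Tᴴ * T = 1 ∧
        Matrix.diagonal ![((‖(1:ℂ)‖ ^ 2 : ℝ) : ℂ), ((‖(((x:ℂ) - 1) / (x:ℂ))‖ ^ 2 : ℝ) : ℂ)]
          = ((‖(1 - (x:ℂ)) * 1 + (x:ℂ) * (((x:ℂ) - 1) / (x:ℂ))‖ ^ 2 : ℝ) : ℂ) • (U * Uᴴ)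
            + ((‖(1 - (x:ℂ)) * (((x:ℂ) - 1) / (x:ℂ)) + (x:ℂ) * 1‖ ^ 2 : ℝ) : ℂ) • (V * Vᴴ)
            + ((x * (1 - x) : ℝ) : ℂ) •
                (((‖(1:ℂ) - ((x:ℂ) - 1) / (x:ℂ)‖ ^ 2 : ℝ) : ℂ) • (S * Sᴴ)
                  + ((‖(1:ℂ) - ((x:ℂ) - 1) / (x:ℂ)‖ ^ 2 : ℝ) : ℂ) • (T * Tᴴ)) := by
  rw [Set.mem_Icc, not_and_or] at hx
  push_neg at hx
  have hx0 : x ≠ 0 := by rcases hx with h | h <;> intro hh <;> nlinarith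
  have hxc : (x:ℂ) ≠ 0 := Complex.ofReal_ne_zero.mpr hx0
  have h2r : (2*x - 1 : ℝ) ≠ 0 := by rcases hx with h | h <;> intro hh <;> nlinarith
  have h2c : (2*(x:ℂ) - 1) ≠ 0 := by
    intro hh; apply h2r
    have : ((2*x - 1 : ℝ) : ℂ) = 0 := by push_cast; linear_combination hh
    exact_mod_cast this
  have e1 : (1 - (x:ℂ)) * 1 + (x:ℂ) * (((x:ℂ) - 1) / (x:ℂ)) = 0 := by field_simp; ring
  have e2 : (1 - (x:ℂ)) * (((x:ℂ) - 1) / (x:ℂ)) + (x:ℂ) * 1 = (2 * (x:ℂ) - 1) / (x:ℂ) := by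
    field_simp; ring
  have e3 : (1 - (x:ℂ)) * (((x:ℂ) - 1) / (x:ℂ)) + (x:ℂ) * 1 ≠ 0 := by
    rw [e2]; exact div_ne_zero h2c hxc
  have e4 : (1:ℂ) - ((x:ℂ) - 1) / (x:ℂ) = 1 / (x:ℂ) := by field_simp; ring
  have e5 : (1:ℂ) - ((x:ℂ) - 1) / (x:ℂ) ≠ 0 := by
    rw [e4]; exact div_ne_zero one_ne_zero hxc
  refine ⟨e1, e2, e3, e4, e5, ?_⟩
  rintro ⟨U, V, S, T, hU, hV, hS, hT, hE⟩
  -- kill the U term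
  have hα : ((‖(1 - (x:ℂ)) * 1 + (x:ℂ) * (((x:ℂ) - 1) / (x:ℂ))‖ ^ 2 : ℝ) : ℂ) = 0 := by
    rw [e1]; simp
  rw [hα, zero_smul, zero_add] at hE
  set v0 := V 0 0 with hv0
  set v1 := V 1 0 with hv1
  set s0 := S 0 0; set s1 := S 1 0; set t0 := T 0 0; set t1 := T 1 0
  set B : ℂ := ((‖(((x:ℂ) - 1) / (x:ℂ))‖ ^ 2 : ℝ) : ℂ) with hB
  set A : ℂ := ((‖(1 - (x:ℂ)) * (((x:ℂ) - 1) / (x:ℂ)) + (x:ℂ) * 1‖ ^ 2 : ℝ) : ℂ)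
  set G : ℂ := ((x * (1 - x) : ℝ) : ℂ) with hG
  set D : ℂ := ((‖(1:ℂ) - ((x:ℂ) - 1) / (x:ℂ)‖ ^ 2 : ℝ) : ℂ) with hD
  have hVn : (starRingEnd ℂ) v0 * v0 + (starRingEnd ℂ) v1 * v1 = 1 := by
    have h := congrFun (congrFun hV 0) 0
    simpa [Matrix.mul_apply, Fin.sum_univ_two, Matrix.conjTranspose_apply,
      Matrix.one_apply] using h
  have h00 := congrFun (congrFun hE 0) 0
  have h01 := congrFun (congrFun hE 0) 1
  have h10 := congrFun (congrFun hE 1) 0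
  have h11 := congrFun (congrFun hE 1) 1
  rw [Matrix.diagonal_apply_ne _ (by decide)] at h01
  rw [Matrix.diagonal_apply_ne _ (by decide)] at h10
  simp only [Matrix.diagonal_apply_eq, Matrix.add_apply,
    Matrix.smul_apply, Matrix.mul_apply, Fin.sum_univ_one, Matrix.conjTranspose_apply,
    smul_eq_mul, Matrix.cons_val_zero, Matrix.cons_val_one, Matrix.head_cons,
    Complex.star_def, norm_one, one_pow, Complex.ofReal_one] at h00 h01 h10 h11
  have key : v1 * (starRingEnd ℂ) v1 + B * (v0 * (starRingEnd ℂ) v0)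
      = G * (D * ((v0*s1 - v1*s0) * (starRingEnd ℂ) (v0*s1 - v1*s0)
          + (v0*t1 - v1*t0) * (starRingEnd ℂ) (v0*t1 - v1*t0))) := by
    simp only [map_sub, _root_.map_mul]
    linear_combination (v1 * (starRingEnd ℂ) v1) * h00 - (v1 * (starRingEnd ℂ) v0) * h01
      - (v0 * (starRingEnd ℂ) v1) * h10 + (v0 * (starRingEnd ℂ) v0) * h11
  rw [Complex.mul_conj, Complex.mul_conj, Complex.mul_conj, Complex.mul_conj] at key
  rw [hB, hD] at key
  have keyR : Complex.normSq v1 + ‖(((x:ℂ) - 1) / (x:ℂ))‖ ^ 2 * Complex.normSq v0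
      = (x * (1 - x)) * (‖(1:ℂ) - ((x:ℂ) - 1) / (x:ℂ)‖ ^ 2
          * (Complex.normSq (v0*s1 - v1*s0) + Complex.normSq (v0*t1 - v1*t0))) := by
    rw [hG] at key
    exact_mod_cast key
  have hVr : Complex.normSq v0 + Complex.normSq v1 = 1 := by
    have h2 : ((Complex.normSq v0 + Complex.normSq v1 : ℝ) : ℂ) = 1 := by
      push_cast
      rw [Complex.normSq_eq_conj_mul_self, Complex.normSq_eq_conj_mul_self]
      exact hVn
    exact_mod_cast h2
  have hbpos : 0 < ‖(((x:ℂ) - 1) / (x:ℂ))‖ ^ 2 := by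
    have : (((x:ℂ) - 1) / (x:ℂ)) ≠ 0 := by
      apply div_ne_zero _ hxc
      intro hh
      have : ((x - 1 : ℝ) : ℂ) = 0 := by push_cast; linear_combination hh
      have : (x - 1 : ℝ) = 0 := by exact_mod_cast this
      rcases hx with h | h <;> nlinarith
    exact pow_pos (norm_pos_iff.mpr this) 2
  have hxneg : x * (1 - x) < 0 := by rcases hx with h | h <;> nlinarith
  have hnn : 0 ≤ ‖(1:ℂ) - ((x:ℂ) - 1) / (x:ℂ)‖ ^ 2
      * (Complex.normSq (v0*s1 - v1*s0) + Complex.normSq (v0*t1 - v1*t0)) :=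
    mul_nonneg (sq_nonneg _)
      (add_nonneg (Complex.normSq_nonneg _) (Complex.normSq_nonneg _))
  have hL : Complex.normSq v1 + ‖(((x:ℂ) - 1) / (x:ℂ))‖ ^ 2 * Complex.normSq v0 ≤ 0 := by
    rw [keyR]
    exact mul_nonpos_of_nonpos_of_nonneg hxneg.le hnn
  have hn0 : Complex.normSq v0 ≤ 0 := by nlinarith [Complex.normSq_nonneg v1, hbpos, hL]
  have hn1 : Complex.normSq v1 ≤ 0 := by
    nlinarith [mul_nonneg hbpos.le (Complex.normSq_nonneg v0), hL]
  linarith [hVr, Complex.normSq_nonneg v0, Complex.normSq_nonneg v1, hn0, hn1]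
end

section
/- Let Z be the 3×3 truncated shift (Z e₁ = e₂, Z e₂ = e₃, Z e₃ = 0). Then Re Z = (Z+Z*)/2 has eigenvalues 0, ±2^{-1/2}, and Im Z = (Z−Z*)/(2i) is unitarily similar to Re Z via the diagonal unitary D = diag(1, −i, −1), i.e. Im Z = D (Re Z) D*. In particular the singular values of Re Z and Im Z both equal (2^{-1/2}, 2^{-1/2}, 0), and for every p > 2 we have μ₃((|Z|^p+|Z*|^p)/2)^{1/p}) = 2^{-1/p} > 2^{-1/2} = μ₃(Re Z) + μ₁(Im Z). -/
open Matrix ComplexOrder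

namespace Matrix.PosSemidef

/-- The positive semidefinite square root of a positive semidefinite matrix
(the definition removed from Mathlib, restored with its old meaning). -/
noncomputable def sqrt {𝕜 : Type*} [RCLike 𝕜] {n : Type*} [Fintype n] [DecidableEq n]
    {A : Matrix n n 𝕜} (hA : PosSemidef A) : Matrix n n 𝕜 :=
  hA.1.eigenvectorUnitary.1 * diagonal ((↑) ∘ (√·) ∘ hA.1.eigenvalues) *
  (star hA.1.eigenvectorUnitary : Matrix n n 𝕜)

theorem posSemidef_sqrt {𝕜 : Type*} [RCLike 𝕜] {n : Type*} [Fintype n] [DecidableEq n]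
    {A : Matrix n n 𝕜} (hA : PosSemidef A) : PosSemidef hA.sqrt := by
  have h := (PosSemidef.diagonal (R := 𝕜) (n := n)
    (d := ((↑) ∘ (√·) ∘ hA.1.eigenvalues)) (fun i => by
      simp only [Pi.zero_apply, Function.comp_apply]
      exact RCLike.ofReal_nonneg.mpr (Real.sqrt_nonneg _))).mul_mul_conjTranspose_same
    (hA.1.eigenvectorUnitary : Matrix n n 𝕜)
  unfold sqrt
  rw [Matrix.star_eq_conjTranspose]
  exact h


theorem eq_sqrt_of_sq_eq {𝕜 : Type*} [RCLike 𝕜] {n : Type*} [Fintype n] [DecidableEq n]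
    {A B : Matrix n n 𝕜} (hB : PosSemidef B) (hA : PosSemidef A) (h : B ^ 2 = A) :
    B = hA.sqrt := by
  have e1 : hA.sqrt = cfc Real.sqrt A := by
    rw [hA.1.cfc_eq, IsHermitian.cfc, sqrt, Unitary.conjStarAlgAut_apply]
  have hspec : ∀ x ∈ spectrum ℝ B, 0 ≤ x := by
    intro x hx
    rw [hB.1.spectrum_real_eq_range_eigenvalues] at hx
    obtain ⟨i, rfl⟩ := hx
    exact hB.eigenvalues_nonneg i
  rw [e1, ← h, ← cfc_comp_pow Real.sqrt 2 B (ha := hB.1.isSelfAdjoint)]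
  rw [cfc_congr (g := id) fun x hx => ?_, cfc_id ℝ B hB.1.isSelfAdjoint]
  simp [Real.sqrt_sq (hspec x hx)]

end Matrix.PosSemidef

/-- `|X| = (XᴴX)^{1/2}`. -/
noncomputable def absM {m n : ℕ} (X : Matrix (Fin m) (Fin n) ℂ) : Matrix (Fin n) (Fin n) ℂ :=
  (Matrix.posSemidef_conjTranspose_mul_self X).sqrt

/-- Functional-calculus real power of a Hermitian matrix. -/
noncomputable def mrpow {n : ℕ} (A : Matrix (Fin n) (Fin n) ℂ) (p : ℝ) :
    Matrix (Fin n) (Fin n) ℂ :=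
  cfc (fun x : ℝ => x ^ p) A

/-- The `i`-th largest eigenvalue of a Hermitian matrix (indices starting at 0). -/
noncomputable def eigDesc {n : ℕ} (A : Matrix (Fin n) (Fin n) ℂ) (hA : A.IsHermitian)
    (i : Fin n) : ℝ :=
  (hA.eigenvalues ∘ Tuple.sort hA.eigenvalues) i.rev

/-- The `i`-th largest singular value of a matrix. -/
noncomputable def singDesc {n : ℕ} (Z : Matrix (Fin n) (Fin n) ℂ) (i : Fin n) : ℝ :=
  eigDesc (absM Z) (Matrix.posSemidef_conjTranspose_mul_self Z).posSemidef_sqrt.1 i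

namespace TSAux
open Polynomial Complex

/-! ### Generic auxiliary lemmas -/

lemma charpoly_conj {n : Type*} [Fintype n] [DecidableEq n] (U V A : Matrix n n ℂ)
    (hUV : U * V = 1) : (U * A * V).charpoly = A.charpoly := by
  have hUV' : U.map C * V.map C = 1 := by
    rw [← Matrix.map_mul, hUV]; exact Matrix.map_one _ (map_zero C) (map_one C)
  have hc : charmatrix (U * A * V) = U.map C * charmatrix A * V.map C := by
    rw [charmatrix, charmatrix, Matrix.mul_sub, Matrix.sub_mul]
    congr 1
    · rw [show (U.map C) * Matrix.scalar n (X : ℂ[X]) = Matrix.scalar n (X : ℂ[X]) * U.map C from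
        ((scalar_commute (X : ℂ[X]) (fun r => Commute.all _ r) (U.map C)).symm).eq,
        Matrix.mul_assoc, hUV', Matrix.mul_one]
    · simp only [RingHom.mapMatrix_apply, Matrix.map_mul]
  rw [Matrix.charpoly, Matrix.charpoly, hc, Matrix.det_mul, Matrix.det_mul]
  have h2 : (U.map C).det * (V.map C).det = 1 := by
    rw [← Matrix.det_mul, hUV', Matrix.det_one]
  calc (U.map C).det * (charmatrix A).det * (V.map C).det
      = (U.map C).det * (V.map C).det * (charmatrix A).det := by ring
    _ = (charmatrix A).det := by rw [h2, one_mul]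

lemma charpoly_diag {n : Type*} [Fintype n] [DecidableEq n] (d : n → ℂ) :
    (Matrix.diagonal d).charpoly = ((Finset.univ.val.map d).map (fun r => X - C r)).prod := by
  have h : charmatrix (Matrix.diagonal d) = Matrix.diagonal (fun i => X - C (d i)) := by
    ext i j
    by_cases h : i = j
    · subst h; simp
    · simp [h, Matrix.diagonal_apply_ne _ h]
  rw [Matrix.charpoly, h, Matrix.det_diagonal, Finset.prod_eq_multiset_prod, Multiset.map_map]
  rfl

lemma hermitian_roots {n : Type*} [Fintype n] [DecidableEq n] {A : Matrix n n ℂ}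
    (hA : A.IsHermitian) :
    A.charpoly.roots = (Finset.univ.val.map hA.eigenvalues).map Complex.ofReal := by
  have h1 : A.charpoly = (Matrix.diagonal ((↑) ∘ hA.eigenvalues : n → ℂ)).charpoly := by
    conv_lhs => rw [hA.spectral_theorem]
    exact charpoly_conj _ _ _ (Unitary.coe_mul_star_self hA.eigenvectorUnitary)
  rw [h1, charpoly_diag, roots_multiset_prod_X_sub_C, Multiset.map_map]

lemma eig_multiset {n : Type*} [Fintype n] [DecidableEq n] {A : Matrix n n ℂ}
    (hA : A.IsHermitian) (s : Multiset ℝ)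
    (h : A.charpoly = ((s.map Complex.ofReal).map (fun r => X - C r)).prod) :
    Finset.univ.val.map hA.eigenvalues = s := by
  apply Multiset.map_injective Complex.ofReal_injective
  rw [← hermitian_roots hA, h, roots_multiset_prod_X_sub_C]

lemma monotone_unique {n : ℕ} {g h : Fin n → ℝ} (hg : Monotone g) (hh : Monotone h)
    (he : Finset.univ.val.map g = Finset.univ.val.map h) : g = h := by
  rw [Fin.univ_val_map, Fin.univ_val_map, Multiset.coe_eq_coe] at he
  exact List.ofFn_injective <| List.Perm.eq_of_sortedLE (List.sortedLE_ofFn_iff.mpr hg) (List.sortedLE_ofFn_iff.mpr hh) he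

lemma eigDesc_eq {n : ℕ} {A : Matrix (Fin n) (Fin n) ℂ} (hA : A.IsHermitian)
    (v : Fin n → ℝ) (hv : Monotone v)
    (h : Finset.univ.val.map hA.eigenvalues = Finset.univ.val.map v) :
    eigDesc A hA = fun i => v i.rev := by
  have h2 : Multiset.map (⇑(Tuple.sort hA.eigenvalues)) Finset.univ.val = Finset.univ.val := by
    simpa using congrArg Finset.val (Finset.map_univ_equiv (Tuple.sort hA.eigenvalues))
  have hperm : Finset.univ.val.map (hA.eigenvalues ∘ Tuple.sort hA.eigenvalues)
      = Finset.univ.val.map hA.eigenvalues := by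
    conv_rhs => rw [← h2]
    rw [Multiset.map_map]
  have key : hA.eigenvalues ∘ Tuple.sort hA.eigenvalues = v :=
    monotone_unique (Tuple.monotone_sort _) hv (hperm.trans h)
  funext i
  rw [eigDesc, key]

lemma singDesc_eq {n : ℕ} (Z B : Matrix (Fin n) (Fin n) ℂ) (h : absM Z = B)
    (v : Fin n → ℝ) (hv : Monotone v)
    (hm : ∀ hB : B.IsHermitian, Finset.univ.val.map hB.eigenvalues = Finset.univ.val.map v) :
    singDesc Z = fun i => v i.rev := by
  subst h
  funext i
  rw [singDesc]
  exact congrFun (eigDesc_eq _ v hv (hm _)) i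

lemma charpoly_shape1 (u v s : ℂ) (hs : s * s = u * u) :
    (Matrix.of ![![u,0,s],![0,v,0],![s,0,u]] : Matrix (Fin 3) (Fin 3) ℂ).charpoly
      = X * (X - C v) * (X - C (2*u)) := by
  have hC : C s * C s = C u * C u := by rw [← _root_.map_mul, ← _root_.map_mul, hs]
  rw [Matrix.charpoly, Matrix.det_fin_three]
  simp [charmatrix_apply, Matrix.diagonal_apply, _root_.map_mul, map_ofNat]
  linear_combination (C v - X) * hC

lemma charpoly_shape2 (u w : ℂ) (hw : w * w = 2 * (u * u)) :
    (Matrix.of ![![0,u,0],![u,0,u],![0,u,0]] : Matrix (Fin 3) (Fin 3) ℂ).charpoly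
      = X * (X - C w) * (X + C w) := by
  have hC : C w * C w = 2 * (C u * C u) := by
    rw [← _root_.map_mul, ← _root_.map_mul, hw, _root_.map_mul, map_ofNat]
  rw [Matrix.charpoly, Matrix.det_fin_three]
  simp [charmatrix_apply, Matrix.diagonal_apply, _root_.map_mul, map_ofNat]
  linear_combination X * hC

lemma charpoly_diag3 (x y z : ℂ) :
    (Matrix.diagonal ![x,y,z] : Matrix (Fin 3) (Fin 3) ℂ).charpoly
      = (X - C x) * (X - C y) * (X - C z) := by
  rw [Matrix.charpoly, Matrix.det_fin_three]
  simp [charmatrix_apply, Matrix.diagonal_apply]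

lemma univ_map3 (f : Fin 3 → ℝ) : Finset.univ.val.map f = {f 0, f 1, f 2} := by
  simp [Fin.univ_val_map, List.ofFn_succ]
  rfl

lemma mono3 {x y z : ℝ} (h1 : x ≤ y) (h2 : y ≤ z) : Monotone (![x,y,z] : Fin 3 → ℝ) := by
  intro i j hij
  fin_cases i <;> fin_cases j <;>
    simp_all [Fin.le_def] <;>
    first
    | exact h1
    | exact h2
    | exact h1.trans h2
    | omega

/-! ### The concrete matrices -/

noncomputable abbrev aR : ℝ := (2:ℝ) ^ (-(1/2) : ℝ)

lemma aR_pos : 0 < aR := Real.rpow_pos_of_pos two_pos _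

lemma aR_sq : aR * aR = 2⁻¹ := by
  rw [aR, ← Real.rpow_add two_pos, show (-(1/2) + -(1/2) : ℝ) = -1 by norm_num,
    Real.rpow_neg_one]

lemma aR_sqC : (aR:ℂ) * (aR:ℂ) = 2⁻¹ := by
  rw [← Complex.ofReal_mul, aR_sq]; norm_num

noncomputable def Zm : Matrix (Fin 3) (Fin 3) ℂ := Matrix.of ![![0,0,0], ![1,0,0], ![0,1,0]]
noncomputable def M0 : Matrix (Fin 3) (Fin 3) ℂ := Matrix.diagonal ![1,1,0]
noncomputable def M1 : Matrix (Fin 3) (Fin 3) ℂ := Matrix.diagonal ![0,1,1]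
noncomputable def Rm : Matrix (Fin 3) (Fin 3) ℂ :=
  Matrix.of ![![0,2⁻¹,0],![2⁻¹,0,2⁻¹],![0,2⁻¹,0]]
noncomputable def Imm : Matrix (Fin 3) (Fin 3) ℂ :=
  Matrix.of ![![0,Complex.I/2,0],![-(Complex.I/2),0,Complex.I/2],![0,-(Complex.I/2),0]]
noncomputable def Pm : Matrix (Fin 3) (Fin 3) ℂ :=
  Matrix.of ![![2⁻¹,0,2⁻¹],![0,1,0],![2⁻¹,0,2⁻¹]]
noncomputable def Qm : Matrix (Fin 3) (Fin 3) ℂ :=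
  Matrix.of ![![2⁻¹,0,-2⁻¹],![0,1,0],![-2⁻¹,0,2⁻¹]]
noncomputable def BR : Matrix (Fin 3) (Fin 3) ℂ :=
  Matrix.of ![![(aR:ℂ)/2,0,(aR:ℂ)/2],![0,(aR:ℂ),0],![(aR:ℂ)/2,0,(aR:ℂ)/2]]
noncomputable def BI : Matrix (Fin 3) (Fin 3) ℂ :=
  Matrix.of ![![(aR:ℂ)/2,0,-((aR:ℂ)/2)],![0,(aR:ℂ),0],![-((aR:ℂ)/2),0,(aR:ℂ)/2]]

lemma hZHZ : Zmᴴ * Zm = M0 := by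
  ext i j; fin_cases i <;> fin_cases j <;>
    simp [Zm, M0, Matrix.mul_apply, Fin.sum_univ_three, Matrix.diagonal]

lemma hZZH : Zm * Zmᴴ = M1 := by
  ext i j; fin_cases i <;> fin_cases j <;>
    simp [Zm, M1, Matrix.mul_apply, Fin.sum_univ_three, Matrix.diagonal]

lemma psdM0 : (M0).PosSemidef := by
  rw [M0, Matrix.posSemidef_diagonal_iff]
  intro i; fin_cases i <;> simp

lemma psdM1 : (M1).PosSemidef := by
  rw [M1, Matrix.posSemidef_diagonal_iff]
  intro i; fin_cases i <;> simp

lemma habsZ : absM Zm = M0 := by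
  refine (psdM0.eq_sqrt_of_sq_eq (Matrix.posSemidef_conjTranspose_mul_self Zm) ?_).symm
  rw [pow_two, hZHZ]
  ext i j; fin_cases i <;> fin_cases j <;>
    simp [M0, Matrix.mul_apply, Fin.sum_univ_three, Matrix.diagonal]

lemma habsZH : absM Zmᴴ = M1 := by
  refine (psdM1.eq_sqrt_of_sq_eq (Matrix.posSemidef_conjTranspose_mul_self Zmᴴ) ?_).symm
  rw [pow_two, Matrix.conjTranspose_conjTranspose, hZZH]
  ext i j; fin_cases i <;> fin_cases j <;>
    simp [M1, Matrix.mul_apply, Fin.sum_univ_three, Matrix.diagonal]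

lemma spec_diag3 {d : Fin 3 → ℂ} {t : ℝ}
    (ht : t ∈ spectrum ℝ (Matrix.diagonal d : Matrix (Fin 3) (Fin 3) ℂ)) :
    (t:ℂ) = d 0 ∨ (t:ℂ) = d 1 ∨ (t:ℂ) = d 2 := by
  rw [← spectrum.algebraMap_mem_iff ℂ, spectrum_diagonal] at ht
  obtain ⟨i, hi⟩ := ht
  fin_cases i
  · exact Or.inl hi.symm
  · exact Or.inr (Or.inl hi.symm)
  · exact Or.inr (Or.inr hi.symm)

lemma saM0 : (Matrix.diagonal ![1,1,0] : Matrix (Fin 3) (Fin 3) ℂ).IsHermitian := by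
  rw [Matrix.isHermitian_diagonal_iff]
  intro i; fin_cases i <;> simp

lemma saM1 : (Matrix.diagonal ![0,1,1] : Matrix (Fin 3) (Fin 3) ℂ).IsHermitian := by
  rw [Matrix.isHermitian_diagonal_iff]
  intro i; fin_cases i <;> simp

lemma mrpowM0 {p : ℝ} (hp : p ≠ 0) :
    mrpow (Matrix.diagonal ![1,1,0] : Matrix (Fin 3) (Fin 3) ℂ) p
      = Matrix.diagonal ![1,1,0] := by
  rw [mrpow, cfc_congr (g := id) fun x hx => ?_, cfc_id ℝ _ saM0.isSelfAdjoint]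
  have h := spec_diag3 hx
  simp only [Matrix.cons_val_zero, Matrix.cons_val_one, Matrix.head_cons,
    Matrix.cons_val_two, Matrix.tail_cons] at h
  rcases h with h | h | h <;> norm_cast at h <;> subst h
  · simp [Real.one_rpow]
  · simp [Real.one_rpow]
  · simp [Real.zero_rpow hp]

lemma mrpowM1 {p : ℝ} (hp : p ≠ 0) :
    mrpow (Matrix.diagonal ![0,1,1] : Matrix (Fin 3) (Fin 3) ℂ) p
      = Matrix.diagonal ![0,1,1] := by
  rw [mrpow, cfc_congr (g := id) fun x hx => ?_, cfc_id ℝ _ saM1.isSelfAdjoint]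
  have h := spec_diag3 hx
  simp only [Matrix.cons_val_zero, Matrix.cons_val_one, Matrix.head_cons,
    Matrix.cons_val_two, Matrix.tail_cons] at h
  rcases h with h | h | h <;> norm_cast at h <;> subst h
  · simp [Real.zero_rpow hp]
  · simp [Real.one_rpow]
  · simp [Real.one_rpow]

lemma sumdiag : ((2:ℂ)⁻¹) • ((Matrix.diagonal ![1,1,0] : Matrix (Fin 3) (Fin 3) ℂ)
      + Matrix.diagonal ![0,1,1]) = Matrix.diagonal ![2⁻¹,1,2⁻¹] := by
  ext i j
  fin_cases i <;> fin_cases j <;> simp [Matrix.diagonal] <;> norm_num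

lemma mrpowS {p : ℝ} (hp : 2 < p) :
    mrpow (Matrix.diagonal ![2⁻¹,1,2⁻¹] : Matrix (Fin 3) (Fin 3) ℂ) (1/p)
      = Matrix.diagonal ![(((2:ℝ) ^ (-(1/p)) : ℝ) : ℂ), 1, (((2:ℝ) ^ (-(1/p)) : ℝ) : ℂ)] := by
  have hp0 : (0:ℝ) < p := by linarith
  set c : ℝ := (2:ℝ) ^ (-(1/p)) with hc
  have hhalf : (2⁻¹ : ℝ) ^ ((1:ℝ)/p) = c := by
    rw [Real.inv_rpow (by norm_num : (0:ℝ) ≤ 2), ← Real.rpow_neg (by norm_num : (0:ℝ) ≤ 2), hc]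
  have hsa : (Matrix.diagonal ![2⁻¹,1,2⁻¹] : Matrix (Fin 3) (Fin 3) ℂ).IsHermitian := by
    rw [Matrix.isHermitian_diagonal_iff]
    intro i; fin_cases i <;>
      · show star _ = _
        simp [Complex.star_def, map_inv₀]
  have heq : (spectrum ℝ (Matrix.diagonal ![2⁻¹,1,2⁻¹] : Matrix (Fin 3) (Fin 3) ℂ)).EqOn
      (fun x : ℝ => x ^ ((1:ℝ)/p)) (fun x : ℝ => (2*c-1) + (2*(1-c)) * x) := by
    intro x hx
    have h := spec_diag3 hx
    simp only [Matrix.cons_val_zero, Matrix.cons_val_one, Matrix.head_cons,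
      Matrix.cons_val_two, Matrix.tail_cons] at h
    rcases h with h | h | h
    all_goals
      first
      | (have hx2 : x = 2⁻¹ := by
           apply Complex.ofReal_injective; rw [h]; norm_num
         subst hx2
         show (2⁻¹:ℝ) ^ ((1:ℝ)/p) = 2*c-1 + 2*(1-c) * 2⁻¹
         rw [hhalf]; ring)
      | (have hx1 : x = 1 := by
           apply Complex.ofReal_injective; rw [h]; norm_num
         subst hx1
         show (1:ℝ) ^ ((1:ℝ)/p) = 2*c-1 + 2*(1-c) * 1
         rw [Real.one_rpow]; ring)
  rw [mrpow, cfc_congr heq, cfc_const_add _ _ _, cfc_const_mul_id _ _]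
  rw [Algebra.algebraMap_eq_smul_one]
  ext i j
  fin_cases i <;> fin_cases j <;>
    simp [Matrix.diagonal, Matrix.one_apply, Complex.real_smul] <;> push_cast <;> ring

/-! ### `R` and `Im` -/

lemma hRdef : ((2:ℂ)⁻¹) • (Zm + Zmᴴ) = Rm := by
  ext i j; fin_cases i <;> fin_cases j <;>
    simp [Zm, Rm, Matrix.vecHead, Matrix.vecTail] <;> norm_num

lemma hImdef : ((2 * Complex.I)⁻¹) • (Zm - Zmᴴ) = Imm := by
  ext i j; fin_cases i <;> fin_cases j <;>
    simp [Zm, Imm, Matrix.vecHead, Matrix.vecTail] <;>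
    norm_num [Complex.ext_iff]

lemma part2 : Imm = (Matrix.diagonal ![1, -Complex.I, -1]) * Rm
    * (Matrix.diagonal ![1, -Complex.I, -1])ᴴ := by
  ext i j; fin_cases i <;> fin_cases j <;>
    simp [Imm, Rm, Matrix.mul_apply, Fin.sum_univ_three, Matrix.diagonal,
      Matrix.conjTranspose_apply, Complex.star_def, Matrix.vecHead, Matrix.vecTail]
  all_goals ring

lemma hPP : Pm * Pm = Pm := by
  ext i j; fin_cases i <;> fin_cases j <;>
    simp [Pm, Matrix.mul_apply, Fin.sum_univ_three] <;> norm_num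

lemma hQQ : Qm * Qm = Qm := by
  ext i j; fin_cases i <;> fin_cases j <;>
    simp [Qm, Matrix.mul_apply, Fin.sum_univ_three] <;> norm_num

lemma hPH : Pmᴴ = Pm := by
  ext i j; fin_cases i <;> fin_cases j <;>
    simp [Pm, Matrix.conjTranspose_apply, Complex.star_def, map_inv₀]

lemma hQH : Qmᴴ = Qm := by
  ext i j; fin_cases i <;> fin_cases j <;>
    simp [Qm, Matrix.conjTranspose_apply, Complex.star_def, map_inv₀]

lemma hRH : Rmᴴ = Rm := by
  ext i j; fin_cases i <;> fin_cases j <;>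
    simp [Rm, Matrix.conjTranspose_apply, Complex.star_def, map_inv₀]

lemma hImH : Immᴴ = Imm := by
  ext i j; fin_cases i <;> fin_cases j <;>
    simp [Imm, Matrix.conjTranspose_apply, Complex.star_def, map_div₀, Complex.conj_I]
  all_goals ring

lemma hBRP : BR = (aR:ℂ) • Pm := by
  ext i j; fin_cases i <;> fin_cases j <;> simp [BR, Pm] <;> ring

lemma hBIQ : BI = (aR:ℂ) • Qm := by
  ext i j; fin_cases i <;> fin_cases j <;> simp [BI, Qm] <;> ring

lemma hRR : Rm * Rm = (2⁻¹:ℂ) • Pm := by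
  ext i j; fin_cases i <;> fin_cases j <;>
    simp [Rm, Pm, Matrix.mul_apply, Fin.sum_univ_three] <;> norm_num

lemma hImIm : Imm * Imm = (2⁻¹:ℂ) • Qm := by
  ext i j; fin_cases i <;> fin_cases j <;>
    simp [Imm, Qm, Matrix.mul_apply, Fin.sum_univ_three] <;>
    simp [Complex.ext_iff] <;> norm_num

lemma smul_proj_sq (c : ℂ) (A : Matrix (Fin 3) (Fin 3) ℂ) (hA : A * A = A) :
    (c • A) * (c • A) = (c * c) • A := by
  rw [Matrix.smul_mul, Matrix.mul_smul, smul_smul, hA]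

lemma psd_smul_proj {A : Matrix (Fin 3) (Fin 3) ℂ} (hA : A * A = A) (hAH : Aᴴ = A) :
    ((aR:ℂ) • A).PosSemidef := by
  have hs : ((Real.sqrt aR : ℝ):ℂ) * ((Real.sqrt aR : ℝ):ℂ) = (aR:ℂ) := by
    rw [← Complex.ofReal_mul, Real.mul_self_sqrt aR_pos.le]
  have key : (aR:ℂ) • A = (((Real.sqrt aR : ℝ):ℂ) • A)ᴴ * (((Real.sqrt aR : ℝ):ℂ) • A) := by
    rw [Matrix.conjTranspose_smul, hAH, Complex.star_def, Complex.conj_ofReal,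
      smul_proj_sq _ _ hA, hs]
  rw [key]
  exact Matrix.posSemidef_conjTranspose_mul_self _

lemma psdBR : BR.PosSemidef := hBRP ▸ psd_smul_proj hPP hPH

lemma psdBI : BI.PosSemidef := hBIQ ▸ psd_smul_proj hQQ hQH

lemma habsR : absM Rm = BR := by
  refine (psdBR.eq_sqrt_of_sq_eq (Matrix.posSemidef_conjTranspose_mul_self Rm) ?_).symm
  rw [pow_two, hBRP, smul_proj_sq _ _ hPP, aR_sqC, hRH, hRR]

lemma habsI : absM Imm = BI := by
  refine (psdBI.eq_sqrt_of_sq_eq (Matrix.posSemidef_conjTranspose_mul_self Imm) ?_).symm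
  rw [pow_two, hBIQ, smul_proj_sq _ _ hQQ, aR_sqC, hImH, hImIm]

lemma eigRm : ∀ hA : Rm.IsHermitian,
    Finset.univ.val.map hA.eigenvalues = ({0, aR, -aR} : Multiset ℝ) := by
  intro hA
  refine eig_multiset hA _ ?_
  have h : Rm.charpoly = X * (X - C (aR:ℂ)) * (X + C (aR:ℂ)) := by
    rw [Rm]
    exact charpoly_shape2 (2⁻¹) (aR:ℂ) (by rw [aR_sqC]; norm_num)
  rw [h]
  simp only [Multiset.insert_eq_cons, Multiset.map_cons, Multiset.map_singleton,
    Multiset.prod_cons, Multiset.prod_singleton, Complex.ofReal_zero, Complex.ofReal_neg,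
    map_zero, map_neg, sub_zero, sub_neg_eq_add]
  ring

lemma eigBR : ∀ hA : BR.IsHermitian,
    Finset.univ.val.map hA.eigenvalues = ({0, aR, aR} : Multiset ℝ) := by
  intro hA
  refine eig_multiset hA _ ?_
  have h : BR.charpoly = X * (X - C (aR:ℂ)) * (X - C (aR:ℂ)) := by
    rw [BR]
    have := charpoly_shape1 ((aR:ℂ)/2) (aR:ℂ) ((aR:ℂ)/2) rfl
    rw [show 2*((aR:ℂ)/2) = (aR:ℂ) by ring] at this
    exact this
  rw [h]
  simp only [Multiset.insert_eq_cons, Multiset.map_cons, Multiset.map_singleton,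
    Multiset.prod_cons, Multiset.prod_singleton, Complex.ofReal_zero, map_zero, sub_zero]
  ring

lemma eigBI : ∀ hA : BI.IsHermitian,
    Finset.univ.val.map hA.eigenvalues = ({0, aR, aR} : Multiset ℝ) := by
  intro hA
  refine eig_multiset hA _ ?_
  have h : BI.charpoly = X * (X - C (aR:ℂ)) * (X - C (aR:ℂ)) := by
    rw [BI]
    have := charpoly_shape1 ((aR:ℂ)/2) (aR:ℂ) (-((aR:ℂ)/2)) (by ring)
    rw [show 2*((aR:ℂ)/2) = (aR:ℂ) by ring] at this
    exact this
  rw [h]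
  simp only [Multiset.insert_eq_cons, Multiset.map_cons, Multiset.map_singleton,
    Multiset.prod_cons, Multiset.prod_singleton, Complex.ofReal_zero, map_zero, sub_zero]
  ring

lemma singDescRm : singDesc Rm = ![aR, aR, 0] := by
  have h := singDesc_eq Rm BR habsR ![0, aR, aR] (mono3 aR_pos.le le_rfl)
    (fun hB => by rw [eigBR hB, univ_map3]; simp)
  rw [h]
  funext i; fin_cases i <;> rfl

lemma singDescImm : singDesc Imm = ![aR, aR, 0] := by
  have h := singDesc_eq Imm BI habsI ![0, aR, aR] (mono3 aR_pos.le le_rfl)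
    (fun hB => by rw [eigBI hB, univ_map3]; simp)
  rw [h]
  funext i; fin_cases i <;> rfl

lemma singDescT {p : ℝ} (hp : 2 < p) :
    singDesc (Matrix.diagonal ![(((2:ℝ) ^ (-(1/p)) : ℝ) : ℂ), 1, (((2:ℝ) ^ (-(1/p)) : ℝ) : ℂ)])
      = ![1, (2:ℝ) ^ (-(1/p)), (2:ℝ) ^ (-(1/p))] := by
  have hp0 : (0:ℝ) < p := by linarith
  set c : ℝ := (2:ℝ) ^ (-(1/p)) with hc
  have hc0 : 0 < c := Real.rpow_pos_of_pos two_pos _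
  have hc1 : c ≤ 1 := Real.rpow_le_one_of_one_le_of_nonpos one_le_two
    (by rw [neg_nonpos]; positivity)
  set T : Matrix (Fin 3) (Fin 3) ℂ := Matrix.diagonal ![((c:ℝ):ℂ), 1, ((c:ℝ):ℂ)] with hT
  have hermT : T.IsHermitian := by
    rw [hT, Matrix.isHermitian_diagonal_iff]
    intro i; fin_cases i <;>
      · show star _ = _
        simp [Complex.star_def, Complex.conj_ofReal]
  have hTH : Tᴴ = T := hermT.eq
  have psdT : T.PosSemidef := by
    rw [hT, Matrix.posSemidef_diagonal_iff]
    intro i; fin_cases i <;> simp [Complex.zero_le_real, hc0.le]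
  have habsT : absM T = T := by
    refine (psdT.eq_sqrt_of_sq_eq (Matrix.posSemidef_conjTranspose_mul_self T) ?_).symm
    rw [pow_two, hTH]
  have heig : ∀ hB : T.IsHermitian,
      Finset.univ.val.map hB.eigenvalues = ({c, 1, c} : Multiset ℝ) := by
    intro hB
    refine eig_multiset hB _ ?_
    rw [hT, charpoly_diag3]
    simp only [Multiset.insert_eq_cons, Multiset.map_cons, Multiset.map_singleton,
      Multiset.prod_cons, Multiset.prod_singleton, Complex.ofReal_one]
    ring
  have h := singDesc_eq T T habsT ![c, c, 1] (mono3 le_rfl hc1)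
    (fun hB => by
      rw [heig hB, univ_map3]
      simp only [Matrix.cons_val_zero, Matrix.cons_val_one, Matrix.head_cons,
        Matrix.cons_val_two, Matrix.tail_cons, Multiset.insert_eq_cons]
      exact congrArg _ (Multiset.cons_swap 1 c _))
  rw [h]
  funext i; fin_cases i <;> rfl

end TSAux

open TSAux in
/-- For the 3×3 truncated shift `Z`: `Re Z` has eigenvalues `0, ±2^{-1/2}`; `Im Z` is
unitarily similar to `Re Z` via `D = diag(1,-i,-1)`; the singular values of `Re Z` and
`Im Z` are `(2^{-1/2}, 2^{-1/2}, 0)`; and for every `p > 2`,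
`μ₃(((|Z|^p+|Z*|^p)/2)^{1/p}) = 2^{-1/p} > 2^{-1/2} = μ₃(Re Z) + μ₁(Im Z)`. -/
theorem truncated_shift_counterexample :
    let Z : Matrix (Fin 3) (Fin 3) ℂ := Matrix.of ![![0,0,0], ![1,0,0], ![0,1,0]]
    let R : Matrix (Fin 3) (Fin 3) ℂ := ((2:ℂ)⁻¹) • (Z + Zᴴ)
    let Im : Matrix (Fin 3) (Fin 3) ℂ := ((2 * Complex.I)⁻¹) • (Z - Zᴴ)
    let D : Matrix (Fin 3) (Fin 3) ℂ := Matrix.diagonal ![1, -Complex.I, -1]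
    (∀ hR : R.IsHermitian,
      Finset.univ.val.map hR.eigenvalues
        = ({0, (2:ℝ) ^ (-(1/2) : ℝ), -((2:ℝ) ^ (-(1/2) : ℝ))} : Multiset ℝ)) ∧
    Im = D * R * Dᴴ ∧
    singDesc R = ![(2:ℝ) ^ (-(1/2) : ℝ), (2:ℝ) ^ (-(1/2) : ℝ), 0] ∧
    singDesc Im = ![(2:ℝ) ^ (-(1/2) : ℝ), (2:ℝ) ^ (-(1/2) : ℝ), 0] ∧
    ∀ p : ℝ, 2 < p →
      singDesc (mrpow (((2:ℂ)⁻¹) • (mrpow (absM Z) p + mrpow (absM Zᴴ) p)) (1 / p))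
          ⟨2, by norm_num⟩ = (2:ℝ) ^ (-(1/p)) ∧
      (2:ℝ) ^ (-(1/p)) > (2:ℝ) ^ (-(1/2) : ℝ) ∧
      singDesc R ⟨2, by norm_num⟩ + singDesc Im ⟨0, by norm_num⟩
        = (2:ℝ) ^ (-(1/2) : ℝ) := by
  intro Z R Im D
  have hZ : Z = Zm := rfl
  have hR : R = Rm := hRdef
  have hIm : Im = Imm := hImdef
  have hsR : singDesc R = ![aR, aR, 0] := by rw [hR, singDescRm]
  have hsI : singDesc Im = ![aR, aR, 0] := by rw [hIm, singDescImm]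
  refine ⟨?_, ?_, ?_, ?_, ?_⟩
  · intro hRh
    have key : ∀ (A : Matrix (Fin 3) (Fin 3) ℂ) (e : A = Rm) (hA : A.IsHermitian),
        Finset.univ.val.map hA.eigenvalues = ({0, aR, -aR} : Multiset ℝ) := by
      rintro A rfl hA; exact eigRm hA
    exact key R hR hRh
  · rw [hIm, hR]; exact part2
  · exact hsR
  · exact hsI
  · intro p hp
    have hp0 : p ≠ 0 := by intro h; rw [h] at hp; norm_num at hp
    refine ⟨?_, ?_, ?_⟩
    · have e1 : mrpow (absM Z) p = Matrix.diagonal ![1,1,0] := by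
        rw [hZ, habsZ, M0]; exact mrpowM0 hp0
      have e2 : mrpow (absM Zᴴ) p = Matrix.diagonal ![0,1,1] := by
        rw [hZ, habsZH, M1]; exact mrpowM1 hp0
      rw [e1, e2, sumdiag, mrpowS hp, singDescT hp]
      rfl
    · have h12 : (1:ℝ)/p < 1/2 := by
        rw [div_lt_div_iff₀ (by linarith) (by norm_num)]; linarith
      exact (Real.rpow_lt_rpow_left_iff one_lt_two).mpr (by linarith)
    · rw [hsR, hsI]
      show (0:ℝ) + aR = aR
      rw [zero_add]
end

section
/- Isometry decomposition of positive block matrices: let m ≥ 2 and let H ∈ M_{mn}(ℂ) be positive semidefinite, written as an m×m array of n×n blocks H = [H_{ij}]. Then there exist isometries V₁, …, V_m ∈ M_{mn,n}(ℂ) (V_k*V_k = Iₙ) such that H = Σ_{k=1}^m V_k H_{kk} V_k*. -/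
open Matrix ComplexOrder

lemma aux_isometry (m n : ℕ) (hm : 0 < m) (A : Matrix (Fin m × Fin n) (Fin n) ℂ) :
    ∃ V : Matrix (Fin m × Fin n) (Fin n) ℂ, Vᴴ * V = 1 ∧ A * Aᴴ = V * (Aᴴ * A) * Vᴴ := by
  have hB : (Aᴴ * A).PosSemidef := posSemidef_conjTranspose_mul_self A
  have hBh := hB.isHermitian
  set d : Fin n → ℝ := hBh.eigenvalues with hd_def
  have hd : ∀ i, 0 ≤ d i := hB.eigenvalues_nonneg
  set U : Matrix (Fin n) (Fin n) ℂ := (hBh.eigenvectorUnitary : Matrix (Fin n) (Fin n) ℂ) with hU_def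
  have hU1 : Uᴴ * U = 1 := by
    rw [← Matrix.star_eq_conjTranspose]
    exact Matrix.mem_unitaryGroup_iff'.mp hBh.eigenvectorUnitary.2
  have hU2 : U * Uᴴ = 1 := by
    rw [← Matrix.star_eq_conjTranspose]
    exact Matrix.mem_unitaryGroup_iff.mp hBh.eigenvectorUnitary.2
  have hspec : Aᴴ * A = U * diagonal (fun i => (d i : ℂ)) * Uᴴ := by
    have := hBh.spectral_theorem
    rw [Unitary.conjStarAlgAut_apply, Matrix.star_eq_conjTranspose] at this
    exact this
  set C : Matrix (Fin m × Fin n) (Fin n) ℂ := A * U with hC_def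
  have hCC : Cᴴ * C = diagonal (fun i => (d i : ℂ)) := by
    have h1 : Cᴴ * C = Uᴴ * (Aᴴ * A) * U := by
      rw [hC_def, conjTranspose_mul]; simp only [Matrix.mul_assoc]
    rw [h1, hspec]; simp only [Matrix.mul_assoc]
    rw [hU1, Matrix.mul_one, ← Matrix.mul_assoc, hU1, Matrix.one_mul]
  have hCzero : ∀ i, d i = 0 → ∀ p, C p i = 0 := by
    intro i hi p
    have h := congrFun (congrFun hCC i) i
    rw [Matrix.mul_apply, Matrix.diagonal_apply_eq] at h
    have h2 : ∑ q, (Complex.normSq (C q i) : ℂ) = 0 := by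
      calc ∑ q, (Complex.normSq (C q i) : ℂ) = ∑ q, Cᴴ i q * C q i := by
            refine Finset.sum_congr rfl fun q _ => ?_
            rw [conjTranspose_apply, ← starRingEnd_apply]
            exact Complex.normSq_eq_conj_mul_self
        _ = 0 := by rw [h, hi]; simp
    have h3 : ∑ q, Complex.normSq (C q i) = 0 := by exact_mod_cast h2
    exact Complex.normSq_eq_zero.mp
      ((Finset.sum_eq_zero_iff_of_nonneg (fun q _ => Complex.normSq_nonneg _)).mp h3 p
        (Finset.mem_univ p))
  set z0 : Fin m := ⟨0, hm⟩ with hz0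
  set s : Set (Fin m × Fin n) := {p | p.1 = z0 ∧ d p.2 ≠ 0} with hs
  set v : Fin m × Fin n → EuclideanSpace ℂ (Fin m × Fin n) :=
    fun p => (((Real.sqrt (d p.2))⁻¹ : ℝ) : ℂ) •
      (WithLp.toLp 2 (fun q => C q p.2) : EuclideanSpace ℂ (Fin m × Fin n)) with hv_def
  have hCij : ∀ i j : Fin n, ∑ r, (starRingEnd ℂ) (C r i) * C r j
      = diagonal (fun i => (d i : ℂ)) i j := by
    intro i j
    have := congrFun (congrFun hCC i) j
    simpa [Matrix.mul_apply, conjTranspose_apply] using this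
  have hv : Orthonormal ℂ (s.domRestrict v) := by
    rw [orthonormal_iff_ite]
    rintro ⟨p, hp1, hp2⟩ ⟨q, hq1, hq2⟩
    simp only [Set.restrict_apply, hv_def]
    rw [inner_smul_left, inner_smul_right, PiLp.inner_apply]
    simp only [RCLike.inner_apply]
    rw [Finset.sum_congr rfl fun x _ => mul_comm (C x q.2) ((starRingEnd ℂ) (C x p.2)), hCij p.2 q.2]
    by_cases hpq : p.2 = q.2
    · have hpq' : p = q := Prod.ext (hp1.trans hq1.symm) hpq
      subst hpq'
      rw [diagonal_apply_eq]
      simp only [Complex.conj_ofReal]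
      have h0 : (0:ℝ) < d p.2 := lt_of_le_of_ne (hd _) (Ne.symm hp2)
      have hs0 : Real.sqrt (d p.2) ≠ 0 := by rw [Real.sqrt_ne_zero']; exact h0
      have hsq : Real.sqrt (d p.2) * Real.sqrt (d p.2) = d p.2 := Real.mul_self_sqrt (hd _)
      rw [if_pos trivial, ← hsq]
      have hne : ((Real.sqrt (d p.2) : ℝ) : ℂ) ≠ 0 := Complex.ofReal_ne_zero.mpr hs0
      push_cast
      field_simp
      rw [Real.sqrt_sq (Real.sqrt_nonneg _)]
    · rw [diagonal_apply_ne _ hpq]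
      have : (⟨p, hp1, hp2⟩ : s) ≠ ⟨q, hq1, hq2⟩ := by
        simp only [ne_eq, Subtype.mk_eq_mk]
        exact fun h => hpq (congrArg Prod.snd h)
      simp [this]
  obtain ⟨b, hb⟩ := hv.exists_orthonormalBasis_extension_of_card_eq
    (by simp [finrank_euclideanSpace])
  set W : Matrix (Fin m × Fin n) (Fin n) ℂ := Matrix.of (fun q i => b (z0, i) q) with hW
  have hWW : Wᴴ * W = 1 := by
    ext i j
    have := orthonormal_iff_ite.mp b.orthonormal (z0, i) (z0, j)
    rw [PiLp.inner_apply] at this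
    simp only [RCLike.inner_apply, starRingEnd_apply] at this
    simp only [Matrix.mul_apply, conjTranspose_apply, hW, Matrix.of_apply, Matrix.one_apply]
    rw [Finset.sum_congr rfl fun x _ => mul_comm (star ((b (z0, i)).ofLp x)) ((b (z0, j)).ofLp x), this]
    simp [Prod.ext_iff]
  have hWD : W * diagonal (fun i => (d i : ℂ)) * Wᴴ = C * Cᴴ := by
    ext p q
    rw [Matrix.mul_apply, Matrix.mul_apply]
    refine Finset.sum_congr rfl (fun i _ => ?_)
    rw [Matrix.mul_diagonal]
    simp only [conjTranspose_apply, hW, Matrix.of_apply]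
    by_cases hi : d i = 0
    · rw [hCzero i hi p, hCzero i hi q, hi]
      simp
    · have hbv : b (z0, i) = v (z0, i) := hb (z0, i) ⟨rfl, hi⟩
      rw [hbv]
      have h0 : (0:ℝ) < d i := lt_of_le_of_ne (hd _) (Ne.symm hi)
      have hs0 : Real.sqrt (d i) ≠ 0 := by rw [Real.sqrt_ne_zero']; exact h0
      have key : (((Real.sqrt (d i))⁻¹ : ℝ) : ℂ) * (((Real.sqrt (d i))⁻¹ : ℝ) : ℂ)
          * ((d i : ℝ) : ℂ) = 1 := by
        rw [← Complex.ofReal_mul, ← Complex.ofReal_mul, ← Complex.ofReal_one]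
        congr 1
        rw [← Real.mul_self_sqrt (hd i)]
        field_simp
        rw [Real.sqrt_sq (Real.sqrt_nonneg _)]
      have happ : ∀ r, v (z0, i) r = (((Real.sqrt (d i))⁻¹ : ℝ) : ℂ) * C r i := fun r => rfl
      rw [happ p, happ q]
      simp only [← starRingEnd_apply, _root_.map_mul, Complex.conj_ofReal]
      linear_combination (C p i * (starRingEnd ℂ) (C q i)) * key
  refine ⟨W * Uᴴ, ?_, ?_⟩
  · rw [conjTranspose_mul, conjTranspose_conjTranspose, Matrix.mul_assoc,
      ← Matrix.mul_assoc Wᴴ W Uᴴ, hWW, Matrix.one_mul, hU2]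
  · have e1 : W * Uᴴ * (U * diagonal (fun i => ((d i : ℝ) : ℂ)) * Uᴴ) * (U * Wᴴ)
        = W * (Uᴴ * U) * diagonal (fun i => ((d i : ℝ) : ℂ)) * ((Uᴴ * U) * Wᴴ) := by
      simp only [Matrix.mul_assoc]
    have e2 : C * Cᴴ = A * Aᴴ := by
      rw [hC_def, conjTranspose_mul, Matrix.mul_assoc, ← Matrix.mul_assoc U Uᴴ Aᴴ, hU2,
        Matrix.one_mul]
    rw [hspec, conjTranspose_mul, conjTranspose_conjTranspose, e1, hU1, Matrix.mul_one,
      Matrix.one_mul, hWD, e2]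


/-- Isometry decomposition of a positive semidefinite block matrix in terms of its
diagonal blocks. -/
theorem isometry_decomposition_of_posSemidef_block (m n : ℕ) (hm : 2 ≤ m)
    (H : Matrix (Fin m × Fin n) (Fin m × Fin n) ℂ) (hH : H.PosSemidef) :
    ∃ V : Fin m → Matrix (Fin m × Fin n) (Fin n) ℂ,
      (∀ k, (V k)ᴴ * V k = 1) ∧
      H = ∑ k : Fin m,
        V k * Matrix.of (fun i j : Fin n => H (k, i) (k, j)) * (V k)ᴴ := by
  set R := (open scoped MatrixOrder in CFC.sqrt H) with hR_def
  have hRH : R.IsHermitian := open scoped MatrixOrder in (CFC.sqrt_nonneg H).posSemidef.isHermitian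
  have hRR : R * R = H := open scoped MatrixOrder in CFC.sqrt_mul_sqrt_self H hH.nonneg
  have hstar : ∀ p r, star (R p r) = R r p := by
    intro p r
    have h1 := congrFun (congrFun hRH r) p
    rwa [conjTranspose_apply] at h1
  set A : Fin m → Matrix (Fin m × Fin n) (Fin n) ℂ :=
    fun k => Matrix.of (fun p b => R p (k, b)) with hA_def
  have hAA : ∀ k, (A k)ᴴ * A k = Matrix.of (fun a b : Fin n => H (k, a) (k, b)) := by
    intro k
    ext a b
    rw [Matrix.mul_apply, Matrix.of_apply]
    calc ∑ p, (A k)ᴴ a p * A k p b = ∑ p, R (k, a) p * R p (k, b) := by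
          refine Finset.sum_congr rfl fun p _ => ?_
          rw [conjTranspose_apply, hA_def]
          simp only [Matrix.of_apply]
          rw [hstar]
      _ = (R * R) (k, a) (k, b) := (Matrix.mul_apply).symm
      _ = H (k, a) (k, b) := by rw [hRR]
  have hsum : ∑ k, A k * (A k)ᴴ = H := by
    ext p q
    rw [Matrix.sum_apply]
    calc ∑ k, (A k * (A k)ᴴ) p q = ∑ k, ∑ b, R p (k, b) * R (k, b) q := by
          refine Finset.sum_congr rfl fun k _ => ?_
          rw [Matrix.mul_apply]
          refine Finset.sum_congr rfl fun b _ => ?_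
          rw [conjTranspose_apply, hA_def]
          simp only [Matrix.of_apply]
          rw [hstar]
      _ = ∑ r : Fin m × Fin n, R p r * R r q := by rw [Fintype.sum_prod_type]
      _ = (R * R) p q := (Matrix.mul_apply).symm
      _ = H p q := by rw [hRR]
  choose V hV1 hV2 using fun k => aux_isometry m n (by omega) (A k)
  refine ⟨V, hV1, ?_⟩
  calc H = ∑ k, A k * (A k)ᴴ := hsum.symm
    _ = ∑ k, V k * Matrix.of (fun i j : Fin n => H (k, i) (k, j)) * (V k)ᴴ := by
        refine Finset.sum_congr rfl fun k _ => ?_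
        rw [hV2 k, hAA k]
end

section
/- There do not exist isometries U₁, U₂, U₃, U₄ ∈ M_{3n,n}(ℂ) such that |A+B|² ⊕ |B+C|² ⊕ |A+C|² = U₁|A+B+C|²U₁* + U₂|A|²U₂* + U₃|B|²U₃* + U₄|C|²U₄* holds for all A, B, C ∈ Mₙ(ℂ). Indeed, taking A = B = C = Iₙ, the identity would read 4·I_{3n} = 9·U₁U₁* + U₂U₂* + U₃U₃* + U₄U₄*, forcing 4·I_{3n} ≥ 9·U₁U₁*, which contradicts ‖9·U₁U₁*‖_∞ = 9 > 4 since U₁U₁* is a nonzero orthogonal projection. -/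
open Matrix ComplexOrder

/-- There are no four isometries `U₁,…,U₄ ∈ M_{3n,n}` realizing
`|A+B|² ⊕ |B+C|² ⊕ |A+C|² = U₁|A+B+C|²U₁ᴴ + U₂|A|²U₂ᴴ + U₃|B|²U₃ᴴ + U₄|C|²U₄ᴴ`
for all `A, B, C ∈ Mₙ(ℂ)`. -/
theorem no_four_isometries (n : ℕ) (hn : 0 < n) :
    ¬ ∃ U₁ U₂ U₃ U₄ : Matrix (Fin n × Fin 3) (Fin n) ℂ,
        U₁ᴴ * U₁ = 1 ∧ U₂ᴴ * U₂ = 1 ∧ U₃ᴴ * U₃ = 1 ∧ U₄ᴴ * U₄ = 1 ∧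
        ∀ A B C : Matrix (Fin n) (Fin n) ℂ,
          Matrix.blockDiagonal
              ![(A + B)ᴴ * (A + B), (B + C)ᴴ * (B + C), (A + C)ᴴ * (A + C)]
            = U₁ * ((A + B + C)ᴴ * (A + B + C)) * U₁ᴴ + U₂ * (Aᴴ * A) * U₂ᴴ
              + U₃ * (Bᴴ * B) * U₃ᴴ + U₄ * (Cᴴ * C) * U₄ᴴ := by
  rintro ⟨U₁, U₂, U₃, U₄, h1, h2, h3, h4, heq⟩
  have key := heq 1 1 1
  have two : ((1 : Matrix (Fin n) (Fin n) ℂ) + 1) = (2:ℂ) • 1 := by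
    ext j k
    simp only [Matrix.add_apply, Matrix.one_apply, Matrix.smul_apply]
    split <;> norm_num
  have three : ((1 : Matrix (Fin n) (Fin n) ℂ) + 1 + 1) = (3:ℂ) • 1 := by
    ext j k
    simp only [Matrix.add_apply, Matrix.one_apply, Matrix.smul_apply]
    split <;> norm_num
  have h4' : ((1 : Matrix (Fin n) (Fin n) ℂ) + 1)ᴴ * (1 + 1) = (4:ℂ) • 1 := by
    rw [two, conjTranspose_smul, conjTranspose_one, smul_mul_smul_comm, one_mul]
    norm_num
  have h9 : ((1 : Matrix (Fin n) (Fin n) ℂ) + 1 + 1)ᴴ * (1 + 1 + 1) = (9:ℂ) • 1 := by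
    rw [three, conjTranspose_smul, conjTranspose_one, smul_mul_smul_comm, one_mul]
    norm_num
  have hone : ((1 : Matrix (Fin n) (Fin n) ℂ))ᴴ * 1 = 1 := by simp
  rw [h4', h9, hone] at key
  have hfun : (![(4:ℂ) • (1 : Matrix (Fin n) (Fin n) ℂ), (4:ℂ) • 1, (4:ℂ) • 1] :
      Fin 3 → Matrix (Fin n) (Fin n) ℂ) = (4:ℂ) • (1 : Fin 3 → Matrix (Fin n) (Fin n) ℂ) := by
    funext i; fin_cases i <;> rfl
  rw [hfun, blockDiagonal_smul, blockDiagonal_one, Matrix.mul_smul, Matrix.smul_mul] at key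
  simp only [Matrix.mul_one] at key
  -- key : (4:ℂ) • 1 = (9:ℂ) • (U₁ * U₁ᴴ) + U₂ * U₂ᴴ + U₃ * U₃ᴴ + U₄ * U₄ᴴ
  have hsub : ((4:ℂ) • (1 : Matrix (Fin n × Fin 3) (Fin n × Fin 3) ℂ)
      - (9:ℂ) • (U₁ * U₁ᴴ)).PosSemidef := by
    have hval : (4:ℂ) • (1 : Matrix (Fin n × Fin 3) (Fin n × Fin 3) ℂ)
        - (9:ℂ) • (U₁ * U₁ᴴ) = U₂ * U₂ᴴ + U₃ * U₃ᴴ + U₄ * U₄ᴴ := by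
      rw [key]; module
    rw [hval]
    exact ((Matrix.posSemidef_self_mul_conjTranspose U₂).add
      (Matrix.posSemidef_self_mul_conjTranspose U₃)).add
      (Matrix.posSemidef_self_mul_conjTranspose U₄)
  set e : Fin n → ℂ := Pi.single (⟨0, hn⟩ : Fin n) 1 with he
  set x : Fin n × Fin 3 → ℂ := U₁ *ᵥ e with hx
  have hxx : star x ⬝ᵥ x = 1 := by
    rw [hx, star_mulVec, dotProduct_mulVec, vecMul_vecMul, h1, vecMul_one]
    simp [he, dotProduct, Pi.single_apply]
  have hPx : (U₁ * U₁ᴴ) *ᵥ x = x := by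
    rw [hx, mulVec_mulVec, Matrix.mul_assoc, h1, Matrix.mul_one]
  have hle := hsub.dotProduct_mulVec_nonneg x
  rw [sub_mulVec, smul_mulVec, smul_mulVec, one_mulVec, hPx,
    dotProduct_sub, dotProduct_smul, dotProduct_smul, hxx] at hle
  have hre : (0:ℝ) ≤ ((4:ℂ) • (1:ℂ) - (9:ℂ) • (1:ℂ)).re := (Complex.le_def.mp hle).1
  norm_num at hre
end

section
/- Sharp scalar Clarkson–Euler inequality: for p ≥ 2 and complex numbers a, b, c, |a+b|^p + |b+c|^p + |c+a|^p ≤ 2^{p-2}(|a+b+c|^p + |a|^p + |b|^p + |c|^p), with the reverse inequality for 0 < p ≤ 2; equality holds for all p > 0 when a = b = −c ≠ 0, so the constant 2^{p-2} is optimal. -/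
open NNReal

private lemma rpow_rpow_inv' {r : ℝ} (hr0 : 0 < r) (a : ℝ≥0) : (a^r)^(1/r) = a := by
  rw [← NNReal.rpow_mul, mul_one_div, div_self hr0.ne', NNReal.rpow_one]

private lemma two_var_concave {r : ℝ} (hr0 : 0 < r) (hr1 : r ≤ 1) (a b : ℝ≥0) :
    (2:ℝ≥0)^(r-1) * (a^r + b^r) ≤ (a+b)^r := by
  have h := NNReal.rpow_add_le_mul_rpow_add_rpow (a^r) (b^r) (p := 1/r)
    (by rw [le_div_iff₀ hr0]; simpa using hr1)
  rw [rpow_rpow_inv' hr0, rpow_rpow_inv' hr0] at h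
  have h2 := NNReal.rpow_le_rpow h hr0.le
  rw [← NNReal.rpow_mul, one_div, inv_mul_cancel₀ hr0.ne', NNReal.rpow_one,
    NNReal.mul_rpow, ← NNReal.rpow_mul] at h2
  have h3 : (r⁻¹ - 1) * r = 1 - r := by field_simp
  rw [h3] at h2
  calc (2:ℝ≥0)^(r-1) * (a^r + b^r) ≤ (2:ℝ≥0)^(r-1) * ((2:ℝ≥0)^(1-r) * (a+b)^r) :=
        mul_le_mul_right h2 _
    _ = (a+b)^r := by
        rw [← mul_assoc, ← NNReal.rpow_add two_ne_zero]
        norm_num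

private lemma key_ge {r : ℝ} (hr : 1 ≤ r) (x1 x2 x3 y1 y2 y3 y4 : ℝ≥0)
    (h : x1 + x2 + x3 = y1 + y2 + y3 + y4) :
    x1^r + x2^r + x3^r ≤ (2:ℝ≥0)^(2*r-2) * (y1^r + y2^r + y3^r + y4^r) := by
  have s1 : x1^r + x2^r + x3^r ≤ (x1 + x2 + x3)^r := by
    calc x1^r + x2^r + x3^r ≤ (x1+x2)^r + x3^r :=
          add_le_add_left (NNReal.add_rpow_le_rpow_add _ _ hr) _
      _ ≤ ((x1+x2)+x3)^r := NNReal.add_rpow_le_rpow_add _ _ hr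
  have s2 : (y1 + y2 + y3 + y4)^r ≤ (2:ℝ≥0)^(2*r-2) * (y1^r + y2^r + y3^r + y4^r) := by
    have h12 := NNReal.rpow_add_le_mul_rpow_add_rpow y1 y2 hr
    have h34 := NNReal.rpow_add_le_mul_rpow_add_rpow y3 y4 hr
    have htop := NNReal.rpow_add_le_mul_rpow_add_rpow (y1+y2) (y3+y4) hr
    calc (y1 + y2 + y3 + y4)^r = ((y1+y2)+(y3+y4))^r := by ring_nf
      _ ≤ (2:ℝ≥0)^(r-1) * ((y1+y2)^r + (y3+y4)^r) := htop
      _ ≤ (2:ℝ≥0)^(r-1) * ((2:ℝ≥0)^(r-1) * (y1^r+y2^r) + (2:ℝ≥0)^(r-1) * (y3^r+y4^r)) :=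
          mul_le_mul_right (add_le_add h12 h34) _
      _ = (2:ℝ≥0)^(2*r-2) * (y1^r + y2^r + y3^r + y4^r) := by
          rw [← mul_add, ← mul_assoc, ← NNReal.rpow_add two_ne_zero]
          ring_nf
  exact s1.trans (h ▸ s2)

private lemma key_le {r : ℝ} (hr0 : 0 < r) (hr : r ≤ 1) (x1 x2 x3 y1 y2 y3 y4 : ℝ≥0)
    (h : x1 + x2 + x3 = y1 + y2 + y3 + y4) :
    (2:ℝ≥0)^(2*r-2) * (y1^r + y2^r + y3^r + y4^r) ≤ x1^r + x2^r + x3^r := by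
  have s1 : (x1 + x2 + x3)^r ≤ x1^r + x2^r + x3^r := by
    calc ((x1+x2)+x3)^r ≤ (x1+x2)^r + x3^r := NNReal.rpow_add_le_add_rpow _ _ hr0.le hr
      _ ≤ x1^r + x2^r + x3^r :=
          add_le_add_left (NNReal.rpow_add_le_add_rpow _ _ hr0.le hr) _
  have s2 : (2:ℝ≥0)^(2*r-2) * (y1^r + y2^r + y3^r + y4^r) ≤ (y1 + y2 + y3 + y4)^r := by
    have h12 := two_var_concave hr0 hr y1 y2
    have h34 := two_var_concave hr0 hr y3 y4
    have htop := two_var_concave hr0 hr (y1+y2) (y3+y4)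
    calc (2:ℝ≥0)^(2*r-2) * (y1^r + y2^r + y3^r + y4^r)
        = (2:ℝ≥0)^(r-1) * ((2:ℝ≥0)^(r-1) * (y1^r+y2^r) + (2:ℝ≥0)^(r-1) * (y3^r+y4^r)) := by
          rw [← mul_add, ← mul_assoc, ← NNReal.rpow_add two_ne_zero]; ring_nf
      _ ≤ (2:ℝ≥0)^(r-1) * ((y1+y2)^r + (y3+y4)^r) :=
          mul_le_mul_right (add_le_add h12 h34) _
      _ ≤ ((y1+y2)+(y3+y4))^r := htop
      _ = (y1 + y2 + y3 + y4)^r := by ring_nf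
  exact (h ▸ s2).trans s1

private lemma euler_nnreal (a b c : ℂ) :
    ‖a+b‖₊^2 + ‖b+c‖₊^2 + ‖c+a‖₊^2 = ‖a+b+c‖₊^2 + ‖a‖₊^2 + ‖b‖₊^2 + ‖c‖₊^2 := by
  have : ‖a+b‖^2 + ‖b+c‖^2 + ‖c+a‖^2 = ‖a+b+c‖^2 + ‖a‖^2 + ‖b‖^2 + ‖c‖^2 := by
    simp only [Complex.sq_norm, Complex.normSq_apply,
      Complex.add_re, Complex.add_im]
    ring
  exact NNReal.coe_injective (by push_cast; exact this)

private lemma bridge (z : ℂ) (p : ℝ) : ‖z‖ ^ p = (((‖z‖₊^2)^(p/2) : ℝ≥0) : ℝ) := by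
  rw [NNReal.coe_rpow]
  push_cast
  rw [← Real.rpow_natCast ‖z‖ 2, ← Real.rpow_mul (norm_nonneg z),
    show (2:ℕ) * (p/2) = p by push_cast; ring]

/-- Sharp scalar Clarkson–Euler inequality with constant `2^(p-2)`, reversed for
`0 < p ≤ 2`, with equality when `a = b = -c ≠ 0`. -/
theorem scalar_clarkson_euler :
    (∀ p : ℝ, 2 ≤ p → ∀ a b c : ℂ,
        ‖a + b‖ ^ p + ‖b + c‖ ^ p + ‖c + a‖ ^ p
          ≤ (2:ℝ) ^ (p - 2) * (‖a + b + c‖ ^ p + ‖a‖ ^ p + ‖b‖ ^ p + ‖c‖ ^ p)) ∧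
    (∀ p : ℝ, 0 < p → p ≤ 2 → ∀ a b c : ℂ,
        (2:ℝ) ^ (p - 2) * (‖a + b + c‖ ^ p + ‖a‖ ^ p + ‖b‖ ^ p + ‖c‖ ^ p)
          ≤ ‖a + b‖ ^ p + ‖b + c‖ ^ p + ‖c + a‖ ^ p) ∧
    (∀ p : ℝ, 0 < p → ∀ a : ℂ, a ≠ 0 →
        ‖a + a‖ ^ p + ‖a + (-a)‖ ^ p + ‖(-a) + a‖ ^ p
          = (2:ℝ) ^ (p - 2) * (‖a + a + (-a)‖ ^ p + ‖a‖ ^ p + ‖a‖ ^ p + ‖(-a)‖ ^ p)) := by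
  have hcoe2 : ∀ q : ℝ, (2:ℝ)^q = (((2:ℝ≥0)^q : ℝ≥0) : ℝ) := by
    intro q; rw [NNReal.coe_rpow]; norm_num
  refine ⟨?_, ?_, ?_⟩
  · intro p hp a b c
    have key := key_ge (r := p/2) (by linarith) _ _ _ _ _ _ _ (euler_nnreal a b c)
    rw [show 2*(p/2) - 2 = p - 2 by ring] at key
    rw [bridge (a+b) p, bridge (b+c) p, bridge (c+a) p, bridge (a+b+c) p,
      bridge a p, bridge b p, bridge c p, hcoe2 (p-2),
      ← NNReal.coe_add, ← NNReal.coe_add, ← NNReal.coe_add, ← NNReal.coe_add,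
      ← NNReal.coe_add, ← NNReal.coe_mul, NNReal.coe_le_coe]
    exact key
  · intro p hp hp2 a b c
    have key := key_le (r := p/2) (by linarith) (by linarith) _ _ _ _ _ _ _
      (euler_nnreal a b c)
    rw [show 2*(p/2) - 2 = p - 2 by ring] at key
    rw [bridge (a+b) p, bridge (b+c) p, bridge (c+a) p, bridge (a+b+c) p,
      bridge a p, bridge b p, bridge c p, hcoe2 (p-2),
      ← NNReal.coe_add, ← NNReal.coe_add, ← NNReal.coe_add, ← NNReal.coe_add,
      ← NNReal.coe_add, ← NNReal.coe_mul, NNReal.coe_le_coe]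
    exact key
  · intro p hp a _
    have h0 : a + (-a) = 0 := by ring
    have h0' : (-a) + a = 0 := by ring
    have h1 : a + a + (-a) = a := by ring
    have h2a : ‖a + a‖ = 2 * ‖a‖ := by
      rw [show a + a = (2:ℂ) * a by ring, norm_mul]
      norm_num
    rw [h0, h0', h1, h2a, norm_zero, Real.zero_rpow hp.ne', norm_neg,
      Real.mul_rpow (by norm_num) (norm_nonneg a)]
    have h4 : (2:ℝ)^(p-2) * 4 = 2^p := by
      have := Real.rpow_natCast (2:ℝ) 2
      rw [show (4:ℝ) = (2:ℝ)^((2:ℕ):ℝ) by rw [this]; norm_num,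
        ← Real.rpow_add (by norm_num : (0:ℝ) < 2)]
      norm_num
    rw [← h4]
    ring
end
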